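/- Let Z be a random subset of a finite set L of words, with the property that Pr[w ∈ Z] = ρ for all w ∈ L, and Pr[w ∈ Z, w' ∈ Z] ≤ ρ²/t*(w,w') for distinct w,w', where t*(w,w') ≥ (1−κ)/|L(q_ℓ)| whenever the last common prefix state of the derivation runs of w and w' is q_ℓ, and where for each w and each level ℓ the number of w' diverging from w at q_ℓ is at most |L|/|L(q_ℓ)|, with runs of length at most n. Then Var[|Z|] ≤ ρ|L| + (ρ|L|)² · n / (1−κ). -/

import Mathlib

open MeasureTheory ProbabilityTheory

/-- Variance bound for the size of a random subset `Z` of a finite set `L`: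
`Pr[w ∈ Z] = ρ` for each `w`, pairwise probabilities are bounded by `ρ²/t*(w,w')`,
`t*(w,w') ≥ (1-κ)/|L(q_ℓ)|` where `ℓ = div w w'` is the divergence level, and the number
of `w'` diverging from `w` at level `ℓ` is at most `|L|/|L(q_ℓ)|`. Then
`Var[|Z|] ≤ ρ|L| + (ρ|L|)² n/(1-κ)`. -/
theorem stmt_5 {Ω α : Type*} [MeasurableSpace Ω] [DecidableEq α]
    (μ : Measure Ω) [IsProbabilityMeasure μ]
    (L : Finset α) (n : ℕ) (hn : 1 ≤ n)
    (κ ρ : ℝ) (hκ : κ ∈ Set.Ioo (0:ℝ) 1) (hρ0 : 0 ≤ ρ) (hρ1 : ρ ≤ 1)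
    (E : α → Set Ω) (hEm : ∀ w, MeasurableSet (E w))
    (hfirst : ∀ w ∈ L, μ (E w) = ENNReal.ofReal ρ)
    (div : α → α → ℕ) (hdiv : ∀ w ∈ L, ∀ w' ∈ L, w ≠ w' → div w w' < n)
    (Lq : α → ℕ → ℝ) (hLq : ∀ w ℓ, 0 < Lq w ℓ)
    (tstar : α → α → ℝ)
    (htstar : ∀ w ∈ L, ∀ w' ∈ L, w ≠ w' → (1 - κ)/(Lq w (div w w')) ≤ tstar w w')
    (hsecond : ∀ w ∈ L, ∀ w' ∈ L, w ≠ w' →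
        μ (E w ∩ E w') ≤ ENNReal.ofReal (ρ^2 / tstar w w'))
    (hclass : ∀ w ∈ L, ∀ ℓ < n,
        ((L.filter (fun w' => w' ≠ w ∧ div w w' = ℓ)).card : ℝ) ≤ (L.card : ℝ)/(Lq w ℓ)) :
    variance (fun ω => ∑ w ∈ L, (E w).indicator (fun _ => (1:ℝ)) ω) μ ≤
      ρ * L.card + (ρ * L.card)^2 * n / (1 - κ) := by
  obtain ⟨hκ0, hκ1⟩ := hκ
  have h1κ : (0:ℝ) < 1 - κ := by linarith
  set X : Ω → ℝ := fun ω => ∑ w ∈ L, (E w).indicator (fun _ => (1:ℝ)) ω with hXdef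
  have hXmem : MemLp X 2 μ :=
    memLp_finset_sum L (fun w _ =>
      memLp_indicator_const 2 (hEm w) (1:ℝ) (Or.inr (measure_ne_top μ _)))
  have hvar : variance X μ ≤ μ[X ^ 2] := variance_le_expectation_sq hXmem.aestronglyMeasurable
  -- compute the second moment as a double sum
  have hX2 : ∀ ω, (X ^ 2) ω = ∑ w ∈ L, ∑ w' ∈ L,
      (E w ∩ E w').indicator (fun _ => (1:ℝ)) ω := by
    intro ω
    simp only [Pi.pow_apply, hXdef, sq, Finset.sum_mul_sum]
    refine Finset.sum_congr rfl fun w _ => Finset.sum_congr rfl fun w' _ => ?_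
    rw [← Set.inter_indicator_mul]
    simp
  have hint : ∀ (s : Set Ω), MeasurableSet s →
      Integrable (s.indicator fun _ => (1:ℝ)) μ := by
    intro s hs
    exact (integrable_indicator_iff hs).2 (integrableOn_const (measure_ne_top μ s) (by simp))
  have hmoment : μ[X ^ 2] = ∑ w ∈ L, ∑ w' ∈ L, (μ (E w ∩ E w')).toReal := by
    rw [integral_congr_ae (Filter.Eventually.of_forall hX2)]
    rw [integral_finset_sum _ (fun w _ => integrable_finset_sum _
      (fun w' _ => hint _ ((hEm w).inter (hEm w'))))]
    refine Finset.sum_congr rfl fun w _ => ?_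
    rw [integral_finset_sum _ (fun w' _ => hint _ ((hEm w).inter (hEm w')))]
    refine Finset.sum_congr rfl fun w' _ => ?_
    rw [integral_indicator_const _ ((hEm w).inter (hEm w'))]
    simp
    rfl
  -- per-pair bound
  have hpair : ∀ w ∈ L, ∀ w' ∈ L, w ≠ w' →
      (μ (E w ∩ E w')).toReal ≤ ρ^2 * Lq w (div w w') / (1 - κ) := by
    intro w hw w' hw' hne
    have hLqpos := hLq w (div w w')
    have htpos : 0 < tstar w w' :=
      lt_of_lt_of_le (div_pos h1κ hLqpos) (htstar w hw w' hw' hne)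
    have h1 : (μ (E w ∩ E w')).toReal ≤ ρ^2 / tstar w w' := by
      refine le_trans (ENNReal.toReal_mono ENNReal.ofReal_ne_top (hsecond w hw w' hw' hne)) ?_
      rw [ENNReal.toReal_ofReal (div_nonneg (sq_nonneg ρ) htpos.le)]
    refine h1.trans ?_
    have h2 : ρ^2 / tstar w w' ≤ ρ^2 / ((1 - κ)/(Lq w (div w w'))) :=
      div_le_div_of_nonneg_left (sq_nonneg ρ) (div_pos h1κ hLqpos) (htstar w hw w' hw' hne)
    refine h2.trans_eq ?_
    rw [div_div_eq_mul_div]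
  -- off-diagonal sum bound for fixed w
  have hoff : ∀ w ∈ L, ∑ w' ∈ L.erase w, (μ (E w ∩ E w')).toReal ≤
      n * (ρ^2 * L.card / (1 - κ)) := by
    intro w hw
    have hmaps : ∀ w' ∈ L.erase w, div w w' ∈ Finset.range n := by
      intro w' hw'
      rw [Finset.mem_range]
      exact hdiv w hw w' (Finset.mem_of_mem_erase hw') (Ne.symm (Finset.ne_of_mem_erase hw'))
    calc ∑ w' ∈ L.erase w, (μ (E w ∩ E w')).toReal
        ≤ ∑ w' ∈ L.erase w, ρ^2 * Lq w (div w w') / (1 - κ) := by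
          refine Finset.sum_le_sum fun w' hw' => ?_
          exact hpair w hw w' (Finset.mem_of_mem_erase hw')
            (Ne.symm (Finset.ne_of_mem_erase hw'))
      _ = ∑ ℓ ∈ Finset.range n, ∑ w' ∈ (L.erase w).filter (fun w' => div w w' = ℓ),
            ρ^2 * Lq w (div w w') / (1 - κ) :=
          (Finset.sum_fiberwise_of_maps_to hmaps _).symm
      _ ≤ ∑ ℓ ∈ Finset.range n, ρ^2 * L.card / (1 - κ) := by
          refine Finset.sum_le_sum fun ℓ hℓ => ?_
          have hLqpos := hLq w ℓ
          have hcard : (((L.erase w).filter (fun w' => div w w' = ℓ)).card : ℝ)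
              ≤ (L.card : ℝ) / Lq w ℓ := by
            have : (L.erase w).filter (fun w' => div w w' = ℓ)
                = L.filter (fun w' => w' ≠ w ∧ div w w' = ℓ) := by
              rw [← Finset.filter_ne' L w, Finset.filter_filter]
            rw [this]
            exact hclass w hw ℓ (Finset.mem_range.1 hℓ)
          calc ∑ w' ∈ (L.erase w).filter (fun w' => div w w' = ℓ),
                ρ^2 * Lq w (div w w') / (1 - κ)
              = (((L.erase w).filter (fun w' => div w w' = ℓ)).card : ℝ)
                  * (ρ^2 * Lq w ℓ / (1 - κ)) := by
                rw [Finset.sum_congr rfl (fun w' hw' => by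
                  rw [(Finset.mem_filter.1 hw').2]), Finset.sum_const, nsmul_eq_mul]
            _ ≤ ((L.card : ℝ) / Lq w ℓ) * (ρ^2 * Lq w ℓ / (1 - κ)) := by
                refine mul_le_mul_of_nonneg_right hcard ?_
                positivity
            _ = ρ^2 * L.card / (1 - κ) := by
                field_simp
      _ = n * (ρ^2 * L.card / (1 - κ)) := by
          rw [Finset.sum_const, Finset.card_range, nsmul_eq_mul]
  -- total bound
  have htotal : ∑ w ∈ L, ∑ w' ∈ L, (μ (E w ∩ E w')).toReal ≤
      ρ * L.card + (ρ * L.card)^2 * n / (1 - κ) := by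
    have hstep : ∀ w ∈ L, ∑ w' ∈ L, (μ (E w ∩ E w')).toReal ≤
        ρ + n * (ρ^2 * L.card / (1 - κ)) := by
      intro w hw
      rw [← Finset.add_sum_erase _ _ hw]
      have hdiag : (μ (E w ∩ E w)).toReal = ρ := by
        rw [Set.inter_self, hfirst w hw, ENNReal.toReal_ofReal hρ0]
      rw [hdiag]
      exact add_le_add le_rfl (hoff w hw)
    calc ∑ w ∈ L, ∑ w' ∈ L, (μ (E w ∩ E w')).toReal
        ≤ ∑ _w ∈ L, (ρ + n * (ρ^2 * L.card / (1 - κ))) := Finset.sum_le_sum hstep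
      _ = L.card * (ρ + n * (ρ^2 * L.card / (1 - κ))) := by
          rw [Finset.sum_const, nsmul_eq_mul]
      _ = ρ * L.card + (ρ * L.card)^2 * n / (1 - κ) := by
          field_simp
  calc variance X μ ≤ μ[X ^ 2] := hvar
    _ = ∑ w ∈ L, ∑ w' ∈ L, (μ (E w ∩ E w')).toReal := hmoment
    _ ≤ _ := htotal
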